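/- Let f : ℝⁿ → ℝ be L-smooth, μ-strongly convex with minimizer x_*. Let x̃_{k+1} = x̃_k - F∇f(x_k) with F > 0 and F ≤ 1/(4L), where x̃_k, x_k ∈ ℝⁿ are arbitrary points related by this recursion. Then (F/2)(f(x_k) - f(x_*)) ≤ (1 - μF/2)‖x̃_k - x_*‖² - ‖x̃_{k+1} - x_*‖² + 3LF‖x_k - x̃_k‖². -/

import Mathlib

open scoped RealInnerProductSpace


theorem descent_lemma (f : EuclideanSpace ℝ (Fin n) → ℝ) (hf : Differentiable ℝ f)
    (L : ℝ) (hL : 0 < L)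
    (hsmooth : ∀ x y, ‖gradient f x - gradient f y‖ ≤ L * ‖x - y‖)
    (x y : EuclideanSpace ℝ (Fin n)) :
    f y ≤ f x + ⟪gradient f x, y - x⟫ + L / 2 * ‖y - x‖ ^ 2 := by
  set v := y - x with hv
  have hgcont : Continuous (gradient f) := by
    apply LipschitzWith.continuous (K := L.toNNReal)
    apply LipschitzWith.of_dist_le_mul
    intro a b
    simpa [dist_eq_norm, Real.coe_toNNReal _ hL.le] using hsmooth a b
  have hderiv : ∀ t : ℝ, HasDerivAt (fun s : ℝ => f (x + s • v))
      ⟪gradient f (x + t • v), v⟫ t := by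
    intro t
    have hline : HasDerivAt (fun s : ℝ => x + s • v) v t := by
      simpa using ((hasDerivAt_id t).smul_const v).const_add x
    have hfd := (hf (x + t • v)).hasFDerivAt
    have h := hfd.comp_hasDerivAt t hline
    have : fderiv ℝ f (x + t • v) v = ⟪gradient f (x + t • v), v⟫ := by
      rw [gradient]
      simp [InnerProductSpace.toDual_apply_apply]
    rwa [this] at h
  have hcont : Continuous fun t : ℝ => ⟪gradient f (x + t • v), v⟫ := by
    exact (hgcont.comp (by continuity)).inner continuous_const
  have hFTC : f (x + (1:ℝ) • v) - f (x + (0:ℝ) • v)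
      = ∫ t in (0:ℝ)..1, ⟪gradient f (x + t • v), v⟫ := by
    exact (intervalIntegral.integral_eq_sub_of_hasDerivAt
      (fun t _ => hderiv t) (hcont.intervalIntegrable 0 1)).symm
  have hmono : (∫ t in (0:ℝ)..1, ⟪gradient f (x + t • v), v⟫)
      ≤ ∫ t in (0:ℝ)..1, (⟪gradient f x, v⟫ + L * t * ‖v‖ ^ 2) := by
    apply intervalIntegral.integral_mono_on (by norm_num)
      (hcont.intervalIntegrable 0 1)
      (((continuous_const.add ((continuous_const.mul continuous_id).mul
        continuous_const))).intervalIntegrable 0 1)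
    intro t ht
    have h1 : ⟪gradient f (x + t • v) - gradient f x, v⟫
        ≤ ‖gradient f (x + t • v) - gradient f x‖ * ‖v‖ := real_inner_le_norm _ _
    have h2 : ‖gradient f (x + t • v) - gradient f x‖ ≤ L * (t * ‖v‖) := by
      have := hsmooth (x + t • v) x
      simpa [norm_smul, abs_of_nonneg ht.1] using this
    have h3 : ⟪gradient f (x + t • v), v⟫ - ⟪gradient f x, v⟫
        ≤ L * (t * ‖v‖) * ‖v‖ := by
      rw [← inner_sub_left]
      exact h1.trans (by nlinarith [norm_nonneg v])
    simp only [Pi.add_apply, Pi.mul_apply, id_eq]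
    nlinarith [sq_nonneg ‖v‖]
  have hval : (∫ t in (0:ℝ)..1, (⟪gradient f x, v⟫ + L * t * ‖v‖ ^ 2))
      = ⟪gradient f x, v⟫ + L / 2 * ‖v‖ ^ 2 := by
    have h1 : (∫ t in (0:ℝ)..1, (⟪gradient f x, v⟫ + L * t * ‖v‖ ^ 2))
        = (∫ t in (0:ℝ)..1, ⟪gradient f x, v⟫) + ∫ t in (0:ℝ)..1, L * t * ‖v‖ ^ 2 := by
      apply intervalIntegral.integral_add
      · exact intervalIntegrable_const
      · exact (((continuous_const.mul continuous_id).mul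
          continuous_const)).intervalIntegrable 0 1
    rw [h1]
    have h2 : (∫ t in (0:ℝ)..1, L * t * ‖v‖ ^ 2)
        = L * ‖v‖ ^ 2 * ∫ t in (0:ℝ)..1, t := by
      rw [← intervalIntegral.integral_const_mul]
      congr 1; ext t; ring
    rw [h2, integral_id]
    simp; ring
  have hend : x + (1:ℝ) • v = y := by simp [hv]
  have hstart : x + (0:ℝ) • v = x := by simp
  rw [hend, hstart] at hFTC
  linarith [hmono.trans_eq hval, hFTC.le, hFTC.ge]


set_option maxHeartbeats 1000000 in
/-- One-iteration progress lemma (Lemma 1) for the AggHB virtual iterates: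
if `x̃_{k+1} = x̃_k - F ∇f(x_k)` with `0 < F ≤ 1/(4L)`, then
`(F/2)(f(x_k) - f(x_*)) ≤ (1 - μF/2)‖x̃_k - x_*‖² - ‖x̃_{k+1} - x_*‖² + 3LF‖x_k - x̃_k‖²`. -/
theorem AggHB_one_iter_progress {n : ℕ}
    (f : EuclideanSpace ℝ (Fin n) → ℝ) (hf : Differentiable ℝ f)
    (L μ : ℝ) (hL : 0 < L) (hμ : 0 ≤ μ)
    (hsmooth : ∀ x y, ‖gradient f x - gradient f y‖ ≤ L * ‖x - y‖)
    (hstrconv : ∀ x y, f x + ⟪gradient f x, y - x⟫ + μ / 2 * ‖y - x‖ ^ 2 ≤ f y)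
    (xstar : EuclideanSpace ℝ (Fin n)) (hmin : ∀ y, f xstar ≤ f y)
    (F : ℝ) (hF : 0 < F) (hF4L : F ≤ 1 / (4 * L))
    (xtk xtk1 xk : EuclideanSpace ℝ (Fin n))
    (hrec : xtk1 = xtk - F • gradient f xk) :
    F / 2 * (f xk - f xstar) ≤
      (1 - μ * F / 2) * ‖xtk - xstar‖ ^ 2 - ‖xtk1 - xstar‖ ^ 2 +
        3 * L * F * ‖xk - xtk‖ ^ 2 := by
  set g : EuclideanSpace ℝ (Fin n) := gradient f xk with hg
  set Δ : ℝ := f xk - f xstar with hΔ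
  have h4L : (0:ℝ) < 4 * L := by linarith
  have hΔ0 : 0 ≤ Δ := by simp [hΔ]; linarith [hmin xk]
  -- gradient norm bound via descent lemma
  have hgrad2 : ‖g‖ ^ 2 ≤ 2 * L * Δ := by
    have hd := descent_lemma f hf L hL hsmooth xk (xk - L⁻¹ • g)
    have e1 : xk - L⁻¹ • g - xk = -(L⁻¹ • g) := by abel
    rw [e1] at hd
    have e2 : ⟪g, -(L⁻¹ • g)⟫ = -(L⁻¹ * ‖g‖ ^ 2) := by
      rw [inner_neg_right, real_inner_smul_right, real_inner_self_eq_norm_sq]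
    have e3 : ‖-(L⁻¹ • g)‖ ^ 2 = L⁻¹ ^ 2 * ‖g‖ ^ 2 := by
      rw [norm_neg, norm_smul]
      simp [abs_of_pos (inv_pos.mpr hL), mul_pow]
    rw [e2, e3] at hd
    have hmin' := hmin (xk - L⁻¹ • g)
    have hL' : L⁻¹ * L = 1 := inv_mul_cancel₀ hL.ne'
    have : f xstar ≤ f xk - L⁻¹ * ‖g‖ ^ 2 + L / 2 * (L⁻¹ ^ 2 * ‖g‖ ^ 2) := le_trans hmin' hd
    have h2 : L / 2 * (L⁻¹ ^ 2 * ‖g‖ ^ 2) = L⁻¹ / 2 * ‖g‖ ^ 2 := by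
      field_simp
    rw [h2] at this
    have h3 : L⁻¹ / 2 * ‖g‖ ^ 2 ≤ Δ := by simp only [hΔ]; linarith
    calc ‖g‖ ^ 2 = 2 * L * (L⁻¹ / 2 * ‖g‖ ^ 2) := by field_simp
    _ ≤ 2 * L * Δ := mul_le_mul_of_nonneg_left h3 (by positivity)
  -- strong convexity at xk vs xstar
  have h1 : Δ + μ / 2 * ‖xk - xstar‖ ^ 2 ≤ ⟪g, xk - xstar⟫ := by
    have := hstrconv xk xstar
    have e : ⟪g, xstar - xk⟫ = -⟪g, xk - xstar⟫ := by
      rw [← inner_neg_right]; congr 1; abel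
    rw [e, norm_sub_rev] at this
    simp only [hΔ]; linarith
  -- μ ≤ L on the direction xk - xtk
  have h2 : μ * ‖xk - xtk‖ ^ 2 ≤ L * ‖xk - xtk‖ ^ 2 := by
    have ha := hstrconv xk xtk
    have hb := hstrconv xtk xk
    have cs : ⟪g - gradient f xtk, xk - xtk⟫ ≤ ‖g - gradient f xtk‖ * ‖xk - xtk‖ :=
      real_inner_le_norm _ _
    have hs := hsmooth xk xtk
    have e1 : ⟪g, xtk - xk⟫ = -⟪g, xk - xtk⟫ := by
      rw [← inner_neg_right]; congr 1; abel
    have e2 : ⟪g - gradient f xtk, xk - xtk⟫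
        = ⟪g, xk - xtk⟫ - ⟪gradient f xtk, xk - xtk⟫ := inner_sub_left _ _ _
    rw [e1, norm_sub_rev xtk xk] at ha
    have cs' : ⟪g, xk - xtk⟫ - ⟪gradient f xtk, xk - xtk⟫ ≤ L * ‖xk - xtk‖ * ‖xk - xtk‖ := by
      rw [← e2]
      exact cs.trans (mul_le_mul_of_nonneg_right hs (norm_nonneg _))
    nlinarith [norm_nonneg (xk - xtk)]
  -- Cauchy-Schwarz
  have h4 : ⟪g, xk - xtk⟫ ≤ ‖g‖ * ‖xk - xtk‖ := real_inner_le_norm _ _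
  -- triangle-type bound
  have h5 : ‖xtk - xstar‖ ^ 2 ≤ 2 * ‖xk - xstar‖ ^ 2 + 2 * ‖xk - xtk‖ ^ 2 := by
    have e : xtk - xstar = (xk - xstar) - (xk - xtk) := by abel
    have := norm_sub_le (xk - xstar) (xk - xtk)
    rw [← e] at this
    nlinarith [sq_nonneg (‖xk - xstar‖ - ‖xk - xtk‖), norm_nonneg (xtk - xstar),
      norm_nonneg (xk - xstar), norm_nonneg (xk - xtk)]
  -- expansion of the new iterate
  have h6 : ‖xtk1 - xstar‖ ^ 2
      = ‖xtk - xstar‖ ^ 2 - 2 * F * ⟪g, xtk - xstar⟫ + F ^ 2 * ‖g‖ ^ 2 := by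
    have e : xtk1 - xstar = (xtk - xstar) - F • g := by rw [hrec]; abel
    rw [e, norm_sub_sq_real, real_inner_smul_right, norm_smul, real_inner_comm]
    simp [abs_of_pos hF, mul_pow]
    ring
  -- inner product decomposition
  have h7 : ⟪g, xtk - xstar⟫ = ⟪g, xk - xstar⟫ - ⟪g, xk - xtk⟫ := by
    rw [← inner_sub_right]; congr 1; abel
  -- Young's inequality
  have hY : ‖g‖ * ‖xk - xtk‖ ≤ ‖g‖ ^ 2 / (4 * L) + L * ‖xk - xtk‖ ^ 2 := by
    rw [div_add' _ _ _ h4L.ne', le_div_iff₀ h4L]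
    nlinarith [sq_nonneg (‖g‖ - 2 * L * ‖xk - xtk‖)]
  have hG2 : ‖g‖ ^ 2 / (4 * L) ≤ Δ / 2 := by
    rw [div_le_div_iff₀ h4L (by norm_num)]
    linarith
  have hFG : F ^ 2 * ‖g‖ ^ 2 ≤ F / 2 * Δ := by
    have h1' : F * (4 * L) ≤ 1 := by
      rw [le_div_iff₀ h4L] at hF4L; linarith
    nlinarith [sq_nonneg ‖g‖, mul_nonneg hF.le (sq_nonneg ‖g‖)]
  have A1 : μ * F / 2 * ‖xtk - xstar‖ ^ 2
      ≤ μ * F / 2 * (2 * ‖xk - xstar‖ ^ 2 + 2 * ‖xk - xtk‖ ^ 2) :=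
    mul_le_mul_of_nonneg_left h5 (by positivity)
  have A2 : 2 * F * (Δ + μ / 2 * ‖xk - xstar‖ ^ 2) ≤ 2 * F * ⟪g, xk - xstar⟫ :=
    mul_le_mul_of_nonneg_left h1 (by positivity)
  have A3 : 2 * F * ⟪g, xk - xtk⟫ ≤ 2 * F * (‖g‖ * ‖xk - xtk‖) :=
    mul_le_mul_of_nonneg_left h4 (by positivity)
  have A4 : F * (μ * ‖xk - xtk‖ ^ 2) ≤ F * (L * ‖xk - xtk‖ ^ 2) :=
    mul_le_mul_of_nonneg_left h2 hF.le
  have A5 : 2 * F * (‖g‖ * ‖xk - xtk‖)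
      ≤ 2 * F * (‖g‖ ^ 2 / (4 * L) + L * ‖xk - xtk‖ ^ 2) :=
    mul_le_mul_of_nonneg_left hY (by positivity)
  have A6 : 2 * F * (‖g‖ ^ 2 / (4 * L)) ≤ 2 * F * (Δ / 2) :=
    mul_le_mul_of_nonneg_left hG2 (by positivity)
  have goal' : F / 2 * Δ ≤
      (1 - μ * F / 2) * ‖xtk - xstar‖ ^ 2 - ‖xtk1 - xstar‖ ^ 2 +
        3 * L * F * ‖xk - xtk‖ ^ 2 := by
    rw [h6, h7]
    nlinarith [A1, A2, A3, A4, A5, A6, hFG]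
  simpa [hΔ] using goal'
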